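/- Let λ > 1, s₀ = π/√(λ²−1), σ ∈ [0, s₀], α₃(s) = log(λ − cos(s√(λ²−1))), h(s) = (λ²−1)/(λ − cos(s√(λ²−1))), and f(s) = sin(πs/(2s₀) + (π/2)(1 − σ/s₀)) · e^{−α₃(s)/2}. Then ∫_{−s₀+σ}^{s₀+σ} h(s)² f(s)² e^{α₃(s)} ds = π(λ + cos(σ√(λ²−1))). -/

import Mathlib

open Real

lemma aux_id (lam k p x y c1 c2 : ℝ) (hk : k ≠ 0) (hk2 : k ^ 2 = lam ^ 2 - 1)
    (hp : p = lam + k) (hxy : x ^ 2 + y ^ 2 = 1) (hKy : lam - y ≠ 0) (hDy : p - y ≠ 0)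
    (hpne : p ≠ 0) :
    k ^ 4 * (1 + y * c2 + x * c1) / (2 * (lam - y) ^ 2) =
      k / 2 * (1 + lam * c2) * ((y * k * (lam - y) - x * (x * k)) / (lam - y) ^ 2)
      + k / 2 * (lam + c2) *
        (1 + 2 / k * (1 / (1 + (x / (p - y)) ^ 2) *
          ((y * k * (p - y) - x * (x * k)) / (p - y) ^ 2)))
      - k ^ 3 * c1 / 2 * ((0 * (lam - y) - 1 * (x * k)) / (lam - y) ^ 2) := by
  subst hp
  have h1q : 1 + (x / (lam + k - y)) ^ 2 = (2 * (lam + k) * (lam - y)) / (lam + k - y) ^ 2 := by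
    field_simp
    linear_combination hxy + hk2
  have hnum1 : (y * k * (lam - y) - x * (x * k)) / (lam - y) ^ 2
      = k * (lam * y - 1) / (lam - y) ^ 2 := by
    congr 1; linear_combination (-k) * hxy
  have hnum2 : 1 / (1 + (x / (lam + k - y)) ^ 2) *
      ((y * k * (lam + k - y) - x * (x * k)) / (lam + k - y) ^ 2)
      = k * ((lam + k) * y - 1) / (2 * (lam + k) * (lam - y)) := by
    rw [h1q]
    have : (y * k * (lam + k - y) - x * (x * k)) = k * ((lam + k) * y - 1) := by
      linear_combination (-k) * hxy
    rw [this]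
    field_simp
  have hmid : 1 + 2 / k * (k * ((lam + k) * y - 1) / (2 * (lam + k) * (lam - y)))
      = k / (lam - y) := by
    field_simp
    linear_combination (-1) * hk2
  rw [hnum1, hnum2, hmid]
  have hstep : k / 2 * (1 + lam * c2) * (k * (lam * y - 1) / (lam - y) ^ 2)
      + k / 2 * (lam + c2) * (k / (lam - y))
      - k ^ 3 * c1 / 2 * ((0 * (lam - y) - 1 * (x * k)) / (lam - y) ^ 2)
      = (k ^ 2 * ((1 + lam * c2) * (lam * y - 1)) + k ^ 2 * ((lam + c2) * (lam - y))
          + k ^ 4 * (c1 * x)) / (2 * (lam - y) ^ 2) := by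
    field_simp
    ring
  rw [hstep]
  congr 1
  linear_combination (k ^ 2 * (1 + c2 * y)) * hk2

theorem stmt_7 (lam : ℝ) (hlam : 1 < lam)
    (s₀ σ : ℝ) (hs₀ : s₀ = π / Real.sqrt (lam ^ 2 - 1))
    (hσ : σ ∈ Set.Icc 0 s₀)
    (a3 h f : ℝ → ℝ)
    (ha3 : ∀ s, a3 s = Real.log (lam - Real.cos (s * Real.sqrt (lam ^ 2 - 1))))
    (hh : ∀ s, h s = (lam ^ 2 - 1) / (lam - Real.cos (s * Real.sqrt (lam ^ 2 - 1))))
    (hf : ∀ s, f s = Real.sin (π * s / (2 * s₀) + (π / 2) * (1 - σ / s₀)) * Real.exp (-(a3 s) / 2)) :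
    ∫ s in (-s₀ + σ)..(s₀ + σ), (h s) ^ 2 * (f s) ^ 2 * Real.exp (a3 s) =
      π * (lam + Real.cos (σ * Real.sqrt (lam ^ 2 - 1))) := by
  have hπ : (0:ℝ) < π := Real.pi_pos
  have hk2' : (0:ℝ) < lam ^ 2 - 1 := by nlinarith
  set k := Real.sqrt (lam ^ 2 - 1) with hkdef
  have hkpos : 0 < k := Real.sqrt_pos.mpr hk2'
  have hk2 : k ^ 2 = lam ^ 2 - 1 := Real.sq_sqrt hk2'.le
  have hkne : k ≠ 0 := ne_of_gt hkpos
  have hs0k : s₀ * k = π := by rw [hs₀]; field_simp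
  set p := lam + k with hpdef
  have hpne : p ≠ 0 := by positivity
  have hK : ∀ u : ℝ, 0 < lam - Real.cos u := fun u => by nlinarith [Real.cos_le_one u]
  have hKne : ∀ u : ℝ, lam - Real.cos u ≠ 0 := fun u => ne_of_gt (hK u)
  have hDne : ∀ u : ℝ, p - Real.cos u ≠ 0 := fun u => by
    have := Real.cos_le_one u; rw [hpdef]; nlinarith
  set c := σ * k with hcdef
  set g : ℝ → ℝ := fun s =>
    k ^ 4 * (1 + Real.cos (s * k) * Real.cos c + Real.sin (s * k) * Real.sin c) /
      (2 * (lam - Real.cos (s * k)) ^ 2) with hg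
  set F : ℝ → ℝ := fun s =>
    k / 2 * (1 + lam * Real.cos c) * (Real.sin (s * k) / (lam - Real.cos (s * k)))
      + k / 2 * (lam + Real.cos c) *
        (s + 2 / k * Real.arctan (Real.sin (s * k) / (p - Real.cos (s * k))))
      - k ^ 3 * Real.sin c / 2 * (1 / (lam - Real.cos (s * k))) with hF
  have hderiv : ∀ s, HasDerivAt F (g s) s := by
    intro s
    have h1 : HasDerivAt (fun s : ℝ => Real.sin (s * k)) (Real.cos (s * k) * k) s :=
      HasDerivAt.comp (h₂ := Real.sin) s (Real.hasDerivAt_sin (s * k)) (hasDerivAt_mul_const k)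
    have h2 : HasDerivAt (fun s : ℝ => lam - Real.cos (s * k)) (Real.sin (s * k) * k) s := by
      have hc := (Real.hasDerivAt_cos (s * k)).comp s (hasDerivAt_mul_const k)
      simpa using hc.const_sub lam
    have h2' : HasDerivAt (fun s : ℝ => p - Real.cos (s * k)) (Real.sin (s * k) * k) s := by
      have hc := (Real.hasDerivAt_cos (s * k)).comp s (hasDerivAt_mul_const k)
      simpa using hc.const_sub p
    have hS : HasDerivAt (fun s : ℝ => Real.sin (s * k) / (lam - Real.cos (s * k)))
        ((Real.cos (s * k) * k * (lam - Real.cos (s * k)) -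
          Real.sin (s * k) * (Real.sin (s * k) * k)) / (lam - Real.cos (s * k)) ^ 2) s :=
      h1.div h2 (hKne _)
    have hq : HasDerivAt (fun s : ℝ => Real.sin (s * k) / (p - Real.cos (s * k)))
        ((Real.cos (s * k) * k * (p - Real.cos (s * k)) -
          Real.sin (s * k) * (Real.sin (s * k) * k)) / (p - Real.cos (s * k)) ^ 2) s :=
      h1.div h2' (hDne _)
    have hJ : HasDerivAt
        (fun s : ℝ => Real.arctan (Real.sin (s * k) / (p - Real.cos (s * k))))
        ((1 / (1 + (Real.sin (s * k) / (p - Real.cos (s * k))) ^ 2)) *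
          ((Real.cos (s * k) * k * (p - Real.cos (s * k)) -
            Real.sin (s * k) * (Real.sin (s * k) * k)) / (p - Real.cos (s * k)) ^ 2)) s :=
      (Real.hasDerivAt_arctan _).comp s hq
    have hR : HasDerivAt (fun s : ℝ => 1 / (lam - Real.cos (s * k)))
        ((0 * (lam - Real.cos (s * k)) - 1 * (Real.sin (s * k) * k)) /
          (lam - Real.cos (s * k)) ^ 2) s :=
      (hasDerivAt_const s (1:ℝ)).div h2 (hKne _)
    have hsum := (((hS.const_mul (k / 2 * (1 + lam * Real.cos c))).add
        (((hasDerivAt_id s).add (hJ.const_mul (2 / k))).const_mul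
          (k / 2 * (lam + Real.cos c)))).sub (hR.const_mul (k ^ 3 * Real.sin c / 2)))
    have hval : g s =
        k / 2 * (1 + lam * Real.cos c) *
          ((Real.cos (s * k) * k * (lam - Real.cos (s * k)) -
            Real.sin (s * k) * (Real.sin (s * k) * k)) / (lam - Real.cos (s * k)) ^ 2)
        + k / 2 * (lam + Real.cos c) *
          (1 + 2 / k * ((1 / (1 + (Real.sin (s * k) / (p - Real.cos (s * k))) ^ 2)) *
            ((Real.cos (s * k) * k * (p - Real.cos (s * k)) -
              Real.sin (s * k) * (Real.sin (s * k) * k)) / (p - Real.cos (s * k)) ^ 2)))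
        - k ^ 3 * Real.sin c / 2 *
          ((0 * (lam - Real.cos (s * k)) - 1 * (Real.sin (s * k) * k)) /
            (lam - Real.cos (s * k)) ^ 2) := by
      rw [hg]
      exact aux_id lam k p (Real.sin (s * k)) (Real.cos (s * k)) (Real.sin c) (Real.cos c)
        hkne hk2 hpdef (Real.sin_sq_add_cos_sq (s * k)) (hKne _) (hDne _) hpne
    rw [hval]
    exact hsum
  have hfg : ∀ s, h s ^ 2 * f s ^ 2 * Real.exp (a3 s) = g s := by
    intro s
    have hA : π * s / (2 * s₀) + (π / 2) * (1 - σ / s₀) = (s - σ) * k / 2 + π / 2 := by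
      rw [hs₀]
      field_simp
      ring
    have hexp : Real.exp (a3 s) = lam - Real.cos (s * k) := by
      rw [ha3, Real.exp_log (hK _)]
    have hexp2 : Real.exp (-(a3 s) / 2) ^ 2 = (lam - Real.cos (s * k))⁻¹ := by
      rw [sq, ← Real.exp_add, show -(a3 s) / 2 + -(a3 s) / 2 = -(a3 s) by ring,
        Real.exp_neg, hexp]
    rw [hh, hf, hA, mul_pow, hexp2, hexp, hg]
    have hsin : Real.sin ((s - σ) * k / 2 + π / 2) = Real.cos ((s - σ) * k / 2) :=
      Real.sin_add_pi_div_two _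
    rw [hsin]
    have hhalf : Real.cos ((s - σ) * k / 2) ^ 2 = (1 + Real.cos ((s - σ) * k)) / 2 := by
      have h2c := Real.cos_sq ((s - σ) * k / 2)
      rw [show 2 * ((s - σ) * k / 2) = (s - σ) * k by ring] at h2c
      linarith [h2c]
    rw [hhalf]
    have hcc : Real.cos ((s - σ) * k) =
        Real.cos (s * k) * Real.cos c + Real.sin (s * k) * Real.sin c := by
      rw [hcdef, show (s - σ) * k = s * k - σ * k by ring, Real.cos_sub]
    rw [hcc, ← hk2]
    have hm := hKne (s * k)
    field_simp
    ring
  simp only [hfg]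
  have hgc : Continuous g := by
    rw [hg]
    apply Continuous.div
    · fun_prop
    · fun_prop
    · intro s
      have := hK (s * k)
      positivity
  rw [intervalIntegral.integral_eq_sub_of_hasDerivAt (fun s _ => hderiv s)
    ((hgc.intervalIntegrable _ _))]
  have e1 : (s₀ + σ) * k = π + c := by rw [hcdef, add_mul, hs0k]
  have e2 : (-s₀ + σ) * k = -π + c := by rw [hcdef, add_mul, neg_mul, hs0k]
  rw [hF]
  simp only [e1, e2]
  simp only [Real.cos_add, Real.sin_add, Real.cos_pi, Real.sin_pi, Real.cos_neg, Real.sin_neg]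
  have hccomm : Real.cos (k * σ) = Real.cos c := by rw [hcdef, mul_comm]
  ring_nf
  linear_combination (lam + Real.cos c) * hs0k
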